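/- Suppose λ is a complex number with Re(λ) > 0, β > 1/Re(λ), α > 0, τ > 0, and |βλ - 1| - (βRe(λ) - 1) < ατβRe(λ). Then every root s of the equation s + αβλ - (1/τ)(1 - βλ)(1 - e^{-sτ}) = 0 has Re(s) < 0. -/

import Mathlib

/-- If `λ` has positive real part, `β > 1/Re λ`, `α, τ > 0`, and
`|βλ - 1| - (β Re λ - 1) < ατβ Re λ`, then every root `s` of
`s + αβλ - (1/τ)(1 - βλ)(1 - e^{-sτ}) = 0` has negative real part. -/
theorem stmt_12 (lam : ℂ) (α β τ : ℝ) (hre : 0 < lam.re)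
    (hβ : 1 / lam.re < β) (hα : 0 < α) (hτ : 0 < τ)
    (hcond : ‖(β : ℂ) * lam - 1‖ - (β * lam.re - 1) < α * τ * β * lam.re)
    (s : ℂ)
    (hroot : s + (α : ℂ) * β * lam
      - (1 / (τ : ℂ)) * (1 - (β : ℂ) * lam) * (1 - Complex.exp (-(s * τ))) = 0) :
    s.re < 0 := by
  by_contra h
  push_neg at h
  set E := Complex.exp (-(s * τ)) with hEdef
  have hEabs : ‖E‖ ≤ 1 := by
    rw [hEdef, Complex.norm_exp]
    apply Real.exp_le_one_iff.mpr
    have : (-(s * τ)).re = -(s.re * τ) := by simp [Complex.mul_re]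
    rw [this]
    nlinarith
  have key : s = (1 / (τ : ℂ)) * ((1 - (β : ℂ) * lam) * (1 - E)) - (α : ℂ) * β * lam := by
    linear_combination hroot
  have hres : s.re = (1/τ) * ((1 - (β : ℂ) * lam) * (1 - E)).re - α * β * lam.re := by
    rw [key]
    have : (1 / (τ : ℂ)) = ((1/τ : ℝ) : ℂ) := by push_cast; ring
    rw [this]
    simp [Complex.mul_re, Complex.ofReal_mul]
  have hsplit : ((1 - (β : ℂ) * lam) * (1 - E)).re
      ≤ (1 - β * lam.re) + ‖(β : ℂ) * lam - 1‖ := by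
    have h1 : (1 - (β : ℂ) * lam) * (1 - E) = (1 - (β : ℂ) * lam) + (-(1 - (β : ℂ) * lam) * E) := by
      ring
    rw [h1, Complex.add_re]
    have h2 : (1 - (β : ℂ) * lam).re = 1 - β * lam.re := by
      simp [Complex.mul_re]
    have h3 : (-(1 - (β : ℂ) * lam) * E).re ≤ ‖(β : ℂ) * lam - 1‖ := by
      calc (-(1 - (β : ℂ) * lam) * E).re ≤ ‖-(1 - (β : ℂ) * lam) * E‖ :=
            Complex.re_le_norm _
        _ = ‖(β : ℂ) * lam - 1‖ * ‖E‖ := by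
            rw [norm_mul]
            congr 1
            congr 1
            ring
        _ ≤ ‖(β : ℂ) * lam - 1‖ * 1 := by
            exact mul_le_mul_of_nonneg_left hEabs (norm_nonneg _)
        _ = ‖(β : ℂ) * lam - 1‖ := mul_one _
    linarith [h2 ▸ le_refl ((1 - (β : ℂ) * lam).re), h3]
  have hfin : s.re < 0 := by
    rw [hres]
    have h4 : (1 - β * lam.re) + ‖(β : ℂ) * lam - 1‖ < α * τ * β * lam.re := by
      linarith
    have h5 : (1/τ) * ((1 - (β : ℂ) * lam) * (1 - E)).re
        ≤ (1/τ) * ((1 - β * lam.re) + ‖(β : ℂ) * lam - 1‖) := by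
      apply mul_le_mul_of_nonneg_left hsplit
      positivity
    have h6 : (1/τ) * ((1 - β * lam.re) + ‖(β : ℂ) * lam - 1‖)
        < (1/τ) * (α * τ * β * lam.re) := by
      apply mul_lt_mul_of_pos_left h4
      positivity
    have h7 : (1/τ) * (α * τ * β * lam.re) = α * β * lam.re := by
      field_simp
    linarith
  linarith
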